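/- If the market (f, S) is arbitrage-free, then there exists a full support martingale measure for (f, S). -/

import Mathlib

open MeasureTheory Filter Topology Pointwise RealInnerProductSpace

variable {Ω : Type*}

section Defs

variable [TopologicalSpace Ω] [MeasurableSpace Ω]

/-- A portfolio `π` is an arbitrage for the market `(f, S)`:
nonpositive cost, nonnegative payoff everywhere, strictly positive payoff somewhere. -/
def IsArbitrage {D : ℕ} (f : Fin (D + 1) → ℝ) (S : Fin (D + 1) → C(Ω, ℝ))
    (π : Fin (D + 1) → ℝ) : Prop :=
  (∑ d, π d * f d) ≤ 0 ∧ (∀ ω : Ω, 0 ≤ ∑ d, π d * S d ω) ∧ (∃ ω : Ω, 0 < ∑ d, π d * S d ω)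

/-- The market `(f, S)` is arbitrage-free. -/
def ArbitrageFree {D : ℕ} (f : Fin (D + 1) → ℝ) (S : Fin (D + 1) → C(Ω, ℝ)) : Prop :=
  ¬ ∃ π : Fin (D + 1) → ℝ, IsArbitrage f S π

/-- A measure has full support: every nonempty open set has positive measure. -/
def HasFullSupport (P : Measure Ω) : Prop :=
  ∀ U : Set Ω, IsOpen U → U.Nonempty → 0 < P U

/-- A martingale measure for the market `(f, S)`: a Borel probability measure under which
every asset payoff is integrable with expectation equal to its time-0 price. -/
def IsMartingaleMeasure {D : ℕ} (f : Fin (D + 1) → ℝ) (S : Fin (D + 1) → C(Ω, ℝ))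
    (P : Measure Ω) : Prop :=
  IsProbabilityMeasure P ∧ ∀ d, Integrable (S d) P ∧ (∫ ω, S d ω ∂P) = f d

/-- A portfolio `π` is a superhedge for the claim `H`. -/
def IsSuperhedge {D : ℕ} (S : Fin (D + 1) → C(Ω, ℝ)) (H : C(Ω, ℝ))
    (π : Fin (D + 1) → ℝ) : Prop :=
  ∀ ω : Ω, H ω ≤ ∑ d, π d * S d ω

/-- A portfolio `π` is a subhedge for the claim `H`. -/
def IsSubhedge {D : ℕ} (S : Fin (D + 1) → C(Ω, ℝ)) (H : C(Ω, ℝ))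
    (π : Fin (D + 1) → ℝ) : Prop :=
  ∀ ω : Ω, (∑ d, π d * S d ω) ≤ H ω

end Defs


lemma aux_proper_separation {E : Type*} [NormedAddCommGroup E] [InnerProductSpace ℝ E]
    [FiniteDimensional ℝ E] {C : Set E} (hC : Convex ℝ C) (hne : C.Nonempty)
    (h0 : (0:E) ∉ C) :
    ∃ π : E, (∀ y ∈ C, (0:ℝ) ≤ ⟪π, y⟫) ∧ ∃ y ∈ C, (0:ℝ) < ⟪π, y⟫ := by
  by_cases h0A : (0:E) ∈ (affineSpan ℝ C : Set E)
  · -- case: 0 in affine span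
    set W : Submodule ℝ E := Submodule.span ℝ C with hW
    set CC : Set E := C + (Wᗮ : Set E) with hCC
    have hCCconv : Convex ℝ CC := hC.add (Wᗮ.convex)
    have hCsub : C ⊆ CC := fun c hc => ⟨c, hc, 0, Wᗮ.zero_mem, add_zero c⟩
    have h0CC : (0:E) ∉ CC := by
      rintro ⟨c, hc, v, hv, hsum⟩
      have hcW : c ∈ W := Submodule.subset_span hc
      have hvW : v ∈ W := by
        have : v = -c := by linear_combination (norm := module) hsum
        rw [this]; exact W.neg_mem hcW
      have hv0 : v = 0 := by
        have := (Submodule.orthogonal_disjoint W).le_bot ⟨hvW, hv⟩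
        simpa using this
      subst hv0
      have hc0 : c = 0 := by simpa using hsum
      rw [hc0] at hc; exact h0 hc
    -- affine span of CC is ⊤
    have hmemA : ∀ e : E, e ∈ (affineSpan ℝ CC : Set E) := by
      have h0' : (0:E) ∈ (affineSpan ℝ CC : Set E) :=
        affineSpan_mono ℝ hCsub h0A
      have hadd : ∀ a b : E, a ∈ (affineSpan ℝ CC : Set E) → b ∈ (affineSpan ℝ CC : Set E) →
          a + b ∈ (affineSpan ℝ CC : Set E) := by
        intro a b ha hb
        have := AffineSubspace.smul_vsub_vadd_mem (affineSpan ℝ CC) (1:ℝ) ha h0' hb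
        simpa using this
      have hsmul : ∀ (t : ℝ) (a : E), a ∈ (affineSpan ℝ CC : Set E) →
          t • a ∈ (affineSpan ℝ CC : Set E) := by
        intro t a ha
        have := AffineSubspace.smul_vsub_vadd_mem (affineSpan ℝ CC) t ha h0' h0'
        simpa using this
      have hWsub : ∀ x ∈ W, x ∈ (affineSpan ℝ CC : Set E) := by
        intro x hx
        refine Submodule.span_induction (fun c hc => ?_) h0' (fun a b _ _ ha hb => hadd a b ha hb)
          (fun t a _ ha => hsmul t a ha) hx
        exact subset_affineSpan ℝ CC (hCsub hc)
      have hWperp : ∀ x ∈ Wᗮ, x ∈ (affineSpan ℝ CC : Set E) := by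
        intro v hv
        obtain ⟨c₀, hc₀⟩ := hne
        have h1 : c₀ + v ∈ (affineSpan ℝ CC : Set E) := subset_affineSpan ℝ CC ⟨c₀, hc₀, v, hv, rfl⟩
        have h2 : c₀ ∈ (affineSpan ℝ CC : Set E) := subset_affineSpan ℝ CC (hCsub hc₀)
        have := AffineSubspace.smul_vsub_vadd_mem (affineSpan ℝ CC) (1:ℝ) h1 h2 h0'
        simpa using this
      intro e
      obtain ⟨y, hy, z, hz, rfl⟩ := W.exists_add_mem_mem_orthogonal e
      exact hadd y z (hWsub y hy) (hWperp z hz)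
    have hspan : affineSpan ℝ CC = ⊤ := by
      rw [eq_top_iff]; intro x _; exact hmemA x
    have hint : (interior CC).Nonempty :=
      (hCCconv.interior_nonempty_iff_affineSpan_eq_top).2 hspan
    have h0int : (0:E) ∉ interior CC := fun h => h0CC (interior_subset h)
    obtain ⟨g, hg⟩ := geometric_hahn_banach_open_point (hCCconv.interior) isOpen_interior h0int
    have hg0 : g 0 = 0 := map_zero g
    set π₀ : E := (InnerProductSpace.toDual ℝ E).symm g with hπ₀
    have hπ₀app : ∀ x : E, ⟪π₀, x⟫ = g x := fun x => InnerProductSpace.toDual_symm_apply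
    -- π₀ ≤ 0 on closure CC
    have hle : ∀ y ∈ CC, ⟪π₀, y⟫ ≤ 0 := by
      intro y hy
      rw [hπ₀app]
      by_contra hpos
      push_neg at hpos
      obtain ⟨a, ha⟩ := hint
      have haneg : g a < 0 := by simpa [hg0] using hg a ha
      set δ : ℝ := g y with hδ
      set t : ℝ := δ / (δ - g a) with ht
      have hden : (0:ℝ) < δ - g a := by linarith
      have ht0 : 0 < t := div_pos hpos hden
      have ht1 : (1 - t) + t = 1 := by ring
      have hmem : (1 - t) • y + t • a ∈ interior CC :=
        hCCconv.combo_closure_interior_mem_interior (subset_closure hy) ha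
          (by rw [ht, sub_nonneg, div_le_one hden]; linarith) ht0 ht1
      have hval : g ((1 - t) • y + t • a) = 0 := by
        have : g ((1 - t) • y + t • a) = (1 - t) * g y + t * g a := by
          simp [map_add, _root_.map_smul, smul_eq_mul]
        rw [this, ht]
        field_simp
        ring
      have := hg _ hmem
      rw [hval, hg0] at this
      exact lt_irrefl _ this
    obtain ⟨c₀, hc₀⟩ := hne
    -- π₀ ∈ W
    have hπ₀W : π₀ ∈ W := by
      rw [← Submodule.orthogonal_orthogonal W]
      intro v hv
      by_contra hne'
      have key : ∀ t : ℝ, ⟪π₀, c₀⟫ + t * ⟪π₀, v⟫ ≤ 0 := by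
        intro t
        have hmem : c₀ + t • v ∈ CC := ⟨c₀, hc₀, t • v, Wᗮ.smul_mem t hv, rfl⟩
        have := hle _ hmem
        rwa [inner_add_right, real_inner_smul_right] at this
      have hvne : ⟪π₀, v⟫ ≠ 0 := by
        intro h; exact hne' (by rw [real_inner_comm] at h; exact h)
      have := key ((1 - ⟪π₀, c₀⟫) / ⟪π₀, v⟫)
      rw [div_mul_cancel₀ _ hvne] at this
      linarith
    have hπ₀ne : π₀ ≠ 0 := by
      obtain ⟨a, ha⟩ := hint
      intro h
      have : g a < 0 := by simpa [hg0] using hg a ha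
      rw [← hπ₀app, h, inner_zero_left] at this
      exact lt_irrefl _ this
    -- strictness
    have hstrict : ∃ c ∈ C, ⟪π₀, c⟫ < 0 := by
      by_contra h
      push_neg at h
      have hzero : ∀ c ∈ C, ⟪π₀, c⟫ = 0 := fun c hc => le_antisymm (hle c (hCsub hc)) (h c hc)
      have hπ₀perp : π₀ ∈ Wᗮ := by
        intro u hu
        refine Submodule.span_induction (fun c hc => ?_) (by simp)
          (fun a b _ _ ha hb => by rw [inner_add_left, ha, hb, add_zero])
          (fun t a _ ha => by rw [inner_smul_left, ha, mul_zero]) hu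
        rw [real_inner_comm]; exact hzero c hc
      have := (Submodule.orthogonal_disjoint W).le_bot ⟨hπ₀W, hπ₀perp⟩
      exact hπ₀ne (by simpa using this)
    obtain ⟨c, hc, hclt⟩ := hstrict
    refine ⟨-π₀, fun y hy => ?_, c, hc, ?_⟩
    · rw [inner_neg_left]; linarith [hle y (hCsub hy)]
    · rw [inner_neg_left]; linarith
  · -- case: 0 not in affine span; strict separation from closed affine span
    have hclosed : IsClosed (affineSpan ℝ C : Set E) :=
      (affineSpan ℝ C).closed_of_finiteDimensional
    have hconv : Convex ℝ (affineSpan ℝ C : Set E) := (affineSpan ℝ C).convex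
    obtain ⟨g, u, hgu, hgt⟩ := geometric_hahn_banach_point_closed hconv hclosed h0A
    set π : E := (InnerProductSpace.toDual ℝ E).symm g with hπ
    have hπapp : ∀ x : E, ⟪π, x⟫ = g x := fun x => InnerProductSpace.toDual_symm_apply
    have hg0 : g 0 = 0 := map_zero g
    obtain ⟨c₀, hc₀⟩ := hne
    have hpos : ∀ y ∈ C, (0:ℝ) < ⟪π, y⟫ := by
      intro y hy
      rw [hπapp]
      have := hgt y (subset_affineSpan ℝ C hy)
      linarith [hgu, hg0.symm ▸ hgu]
    exact ⟨π, fun y hy => (hpos y hy).le, c₀, hc₀, hpos c₀ hc₀⟩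


lemma aux_exists_Q {Ω : Type*} [MetricSpace Ω] [Nonempty Ω]
    [TopologicalSpace.SeparableSpace Ω] [MeasurableSpace Ω] [BorelSpace Ω] {D : ℕ}
    (S : Fin (D + 1) → C(Ω, ℝ)) (hS : ∀ d ω, 0 ≤ S d ω) (hS0 : ∀ ω, S 0 ω = 1) :
    ∃ Q : Measure Ω, IsProbabilityMeasure Q ∧
      (∀ U : Set Ω, IsOpen U → U.Nonempty → 0 < Q U) ∧ ∀ d, Integrable (S d) Q := by
  set u : ℕ → Ω := TopologicalSpace.denseSeq Ω with hu
  have hd : DenseRange u := TopologicalSpace.denseRange_denseSeq Ω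
  set M : ℕ → ℝ := fun n => ∑ d, S d (u n) with hM
  have hM1 : ∀ n, 1 ≤ M n := by
    intro n
    have : S 0 (u n) ≤ M n :=
      Finset.single_le_sum (f := fun d => S d (u n)) (fun d _ => hS d (u n)) (Finset.mem_univ 0)
    rw [hS0 (u n)] at this; exact this
  have hMpos : ∀ n, 0 < M n := fun n => lt_of_lt_of_le one_pos (hM1 n)
  set a : ℕ → ℝ := fun n => (1/2 : ℝ) ^ (n+1) / M n with ha
  have hapos : ∀ n, 0 < a n := fun n => div_pos (by positivity) (hMpos n)
  have hale : ∀ n, a n ≤ (1/2 : ℝ) ^ (n+1) := by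
    intro n
    rw [ha]
    exact div_le_self (by positivity) (hM1 n)
  have hgeo : Summable (fun n : ℕ => (1/2 : ℝ) ^ (n+1)) := by
    have := summable_geometric_of_lt_one (r := (1/2:ℝ)) (by norm_num) (by norm_num)
    simpa [pow_succ, mul_comm] using this.mul_left (1/2 : ℝ)
  have hasum : Summable a := Summable.of_nonneg_of_le (fun n => (hapos n).le) hale hgeo
  set c0 : ℝ := ∑' n, a n with hc0
  have hc0pos : 0 < c0 := by
    exact Summable.tsum_pos hasum (fun n => (hapos n).le) 0 (hapos 0)
  set w : ℕ → ℝ := fun n => a n / c0 with hw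
  have hwpos : ∀ n, 0 < w n := fun n => div_pos (hapos n) hc0pos
  have hwsum : Summable w := hasum.div_const c0
  have hwtsum : ∑' n, w n = 1 := by
    rw [hw]
    simp only
    rw [tsum_div_const, ← hc0, div_self hc0pos.ne']
  set Q : Measure Ω := Measure.sum (fun n => ENNReal.ofReal (w n) • Measure.dirac (u n)) with hQ
  have hQapp : ∀ s : Set Ω, MeasurableSet s →
      Q s = ∑' n, ENNReal.ofReal (w n) * Measure.dirac (u n) s := by
    intro s hs
    rw [hQ, Measure.sum_apply _ hs]
    simp [Measure.smul_apply, smul_eq_mul]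
  have hQprob : IsProbabilityMeasure Q := by
    constructor
    rw [hQapp _ MeasurableSet.univ]
    simp only [measure_univ, mul_one]
    rw [← ENNReal.ofReal_tsum_of_nonneg (fun n => (hwpos n).le) hwsum, hwtsum,
      ENNReal.ofReal_one]
  refine ⟨Q, hQprob, ?_, ?_⟩
  · intro U hU hUne
    obtain ⟨n, hn⟩ := hd.exists_mem_open hU hUne
    have : ENNReal.ofReal (w n) * Measure.dirac (u n) U ≤ Q U := by
      rw [hQapp U hU.measurableSet]
      exact ENNReal.le_tsum n
    refine lt_of_lt_of_le ?_ this
    rw [Measure.dirac_apply' _ hU.measurableSet, Set.indicator_of_mem hn]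
    simp [ENNReal.ofReal_pos.2 (hwpos n)]
  · intro d
    refine ⟨(S d).continuous.aestronglyMeasurable, ?_⟩
    show (∫⁻ ω, (‖S d ω‖₊ : ENNReal) ∂Q) < ⊤
    rw [hQ, lintegral_sum_measure]
    have hbound : ∀ n, ∫⁻ ω, (‖S d ω‖₊ : ENNReal) ∂(ENNReal.ofReal (w n) • Measure.dirac (u n))
        ≤ ENNReal.ofReal ((1/2 : ℝ) ^ (n+1) / c0) := by
      intro n
      rw [lintegral_smul_measure, lintegral_dirac]
      have h1 : (‖S d (u n)‖₊ : ENNReal) = ENNReal.ofReal (S d (u n)) := by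
        rw [← Real.enorm_eq_ofReal (hS d (u n))]; rfl
      rw [h1, smul_eq_mul, ← ENNReal.ofReal_mul (hwpos n).le]
      apply ENNReal.ofReal_le_ofReal
      have h2 : S d (u n) ≤ M n := by
        rw [hM]
        exact Finset.single_le_sum (f := fun e => S e (u n)) (fun e _ => hS e (u n))
          (Finset.mem_univ d)
      have h3 : w n * S d (u n) ≤ w n * M n := by
        exact mul_le_mul_of_nonneg_left h2 (hwpos n).le
      refine h3.trans (le_of_eq ?_)
      have h5 : a n * M n = (1/2:ℝ)^(n+1) := div_mul_cancel₀ _ (hMpos n).ne'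
      calc w n * M n = a n * M n / c0 := div_mul_eq_mul_div _ _ _
        _ = (1/2:ℝ)^(n+1)/c0 := by rw [h5]
    refine lt_of_le_of_lt (ENNReal.tsum_le_tsum hbound) ?_
    rw [← ENNReal.ofReal_tsum_of_nonneg
      (fun n => by positivity) (hgeo.div_const c0)]
    exact ENNReal.ofReal_lt_top


lemma aux_halfspace_convex {n : ℕ} (π : EuclideanSpace ℝ (Fin n)) (c : ℝ) :
    Convex ℝ {z : EuclideanSpace ℝ (Fin n) | ⟪π, z⟫ ≤ c} :=
  convex_halfSpace_le ⟨fun a b' => inner_add_right π a b',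
    fun r a => real_inner_smul_right π a r⟩ c

set_option maxHeartbeats 2000000 in
/-- no arbitrage implies existence of a full support martingale measure. -/
theorem arbitrageFree_implies_fullSupportMartingaleMeasure
    [MetricSpace Ω] [Nonempty Ω] [TopologicalSpace.SeparableSpace Ω] [CompleteSpace Ω]
    [MeasurableSpace Ω] [BorelSpace Ω] {D : ℕ} (f : Fin (D + 1) → ℝ) (S : Fin (D + 1) → C(Ω, ℝ))
    (hf : ∀ d, 0 ≤ f d) (hS : ∀ d ω, 0 ≤ S d ω)
    (hS0 : ∀ ω, S 0 ω = 1) (hf0 : f 0 = 1)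
    (hNA : ArbitrageFree f S) :
    ∃ P : Measure Ω, IsMartingaleMeasure f S P ∧ HasFullSupport P := by
  classical
  obtain ⟨Q, hQprob, hQfull, hQint⟩ := aux_exists_Q S hS hS0
  obtain ⟨φ, hφ⟩ : ∃ φ' : Ω → EuclideanSpace ℝ (Fin (D + 1)), φ' = fun ω => WithLp.toLp 2 (fun d => S d ω) := ⟨_, rfl⟩
  obtain ⟨b, hb⟩ : ∃ b' : EuclideanSpace ℝ (Fin (D + 1)), b' = WithLp.toLp 2 (fun d => ∫ ω, S d ω ∂Q) := ⟨_, rfl⟩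
  obtain ⟨F, hF⟩ : ∃ F' : EuclideanSpace ℝ (Fin (D + 1)), F' = WithLp.toLp 2 (fun d => f d) := ⟨_, rfl⟩
  have hφapp : ∀ ω d, φ ω d = S d ω := by intro ω d; rw [hφ]
  have hbapp : ∀ d, b d = ∫ ω, S d ω ∂Q := by intro d; rw [hb]
  have hFapp : ∀ d, F d = f d := by intro d; rw [hF]
  set C₀ : Set (EuclideanSpace ℝ (Fin (D + 1))) := convexHull ℝ (Set.range φ) with hC₀
  have hC₀conv : Convex ℝ C₀ := convex_convexHull ℝ _
  obtain ⟨ω₀⟩ := (inferInstance : Nonempty Ω)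
  have hφmem : ∀ ω, φ ω ∈ C₀ := fun ω => subset_convexHull ℝ _ ⟨ω, rfl⟩
  set CS : Set (EuclideanSpace ℝ (Fin (D + 1))) :=
    {y | ∃ (ε : ℝ) (x : EuclideanSpace ℝ (Fin (D + 1))), (0 < ε ∧ ε ≤ 1) ∧ x ∈ C₀ ∧ y = ε • b + (1 - ε) • x} with hCS
  have hinner : ∀ π x : EuclideanSpace ℝ (Fin (D + 1)),
      ⟪π, x⟫ = ∑ d, π d * x d := by
    intro π x
    simp [PiLp.inner_apply, RCLike.inner_apply, conj_trivial, mul_comm]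
  -- CS is convex
  have hCSconv : Convex ℝ CS := by
    rintro y1 ⟨ε1, x1, ⟨hε10, hε11⟩, hx1, rfl⟩ y2 ⟨ε2, x2, ⟨hε20, hε21⟩, hx2, rfl⟩ s t hs ht hst
    have hεpos : 0 < s * ε1 + t * ε2 := by
      rcases eq_or_lt_of_le hs with h|h
      · have hts : t = 1 := by linarith
        rw [← h, hts]; simpa using hε20
      · nlinarith [mul_nonneg ht hε20.le]
    have hεle : s * ε1 + t * ε2 ≤ 1 := by
      nlinarith [mul_le_of_le_one_right hs hε11, mul_le_of_le_one_right ht hε21]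
    set ε := s * ε1 + t * ε2 with hε
    by_cases hβ : 1 - ε = 0
    · have hn1 : 0 ≤ s * (1 - ε1) := mul_nonneg hs (by linarith)
      have hn2 : 0 ≤ t * (1 - ε2) := mul_nonneg ht (by linarith)
      have hsum0 : s * (1 - ε1) + t * (1 - ε2) = 0 := by
        rw [hε] at hβ; nlinarith
      have h1 : s * (1 - ε1) = 0 := by linarith
      have h2 : t * (1 - ε2) = 0 := by linarith
      refine ⟨ε, x1, ⟨hεpos, hεle⟩, hx1, ?_⟩
      simp only [smul_add, smul_smul]
      rw [h1, h2, zero_smul, zero_smul, add_zero, add_zero, hβ, zero_smul, add_zero,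
        ← add_smul, ← hε]
    · have hβpos : 0 < 1 - ε := lt_of_le_of_ne (by linarith) (Ne.symm hβ)
      have hn1 : 0 ≤ s * (1 - ε1) / (1 - ε) :=
        div_nonneg (mul_nonneg hs (by linarith)) hβpos.le
      have hn2 : 0 ≤ t * (1 - ε2) / (1 - ε) :=
        div_nonneg (mul_nonneg ht (by linarith)) hβpos.le
      have hsum1 : s * (1 - ε1) / (1 - ε) + t * (1 - ε2) / (1 - ε) = 1 := by
        rw [← add_div, hε]
        rw [div_eq_one_iff_eq (by rw [← hε]; exact hβ)]
        linarith
      refine ⟨ε, (s * (1 - ε1) / (1 - ε)) • x1 + (t * (1 - ε2) / (1 - ε)) • x2,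
        ⟨hεpos, hεle⟩, hC₀conv hx1 hx2 hn1 hn2 hsum1, ?_⟩
      have e1 : (1 - ε) * (s * (1 - ε1) / (1 - ε)) = s * (1 - ε1) := by field_simp
      have e2 : (1 - ε) * (t * (1 - ε2) / (1 - ε)) = t * (1 - ε2) := by field_simp
      simp only [smul_add, smul_smul]
      rw [e1, e2, hε]
      rw [add_smul]
      abel
  -- Main claim : F ∈ CS
  have hFC : F ∈ CS := by
    by_contra hFC
    set Csh : Set (EuclideanSpace ℝ (Fin (D + 1))) := (fun z => -F + z) '' CS with hCsh
    have hCshconv : Convex ℝ Csh := hCSconv.translate (-F)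
    have hCshne : Csh.Nonempty := by
      refine ⟨-F + b, ⟨b, ⟨1, φ ω₀, ⟨one_pos, le_refl 1⟩, hφmem ω₀, by simp⟩, rfl⟩⟩
    have h0notin : (0 : EuclideanSpace ℝ (Fin (D + 1))) ∉ Csh := by
      rintro ⟨y, hy, hy0⟩
      have : y = F := by linear_combination (norm := module) hy0
      rw [this] at hy; exact hFC hy
    obtain ⟨π, hπle, y₀, hy₀, hy₀pos⟩ := aux_proper_separation hCshconv hCshne h0notin
    obtain ⟨c, hc⟩ : ∃ r : ℝ, r = ⟪π, F⟫ := ⟨_, rfl⟩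
    have hπle' : ∀ y ∈ CS, c ≤ ⟪π, y⟫ := by
      intro y hy
      have := hπle _ ⟨y, hy, rfl⟩
      rw [inner_add_right, inner_neg_right] at this
      rw [hc]
      linarith
    -- every point of C₀ has inner ≥ c (limit ε → 0)
    have hC₀ge : ∀ x ∈ C₀, c ≤ ⟪π, x⟫ := by
      intro x hx
      have hseq : ∀ n : ℕ, c ≤ (1 / ((n:ℝ) + 1)) * ⟪π, b⟫ + (1 - 1 / ((n:ℝ) + 1)) * ⟪π, x⟫ := by
        intro n
        have hpos : (0:ℝ) < 1 / ((n:ℝ) + 1) := by positivity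
        have hle1 : (1:ℝ) / ((n:ℝ) + 1) ≤ 1 := by
          rw [div_le_one (by positivity)]
          have : (0:ℝ) ≤ (n:ℝ) := Nat.cast_nonneg n
          linarith
        have hmem : (1 / ((n:ℝ) + 1)) • b + (1 - 1 / ((n:ℝ) + 1)) • x ∈ CS :=
          ⟨1 / ((n:ℝ) + 1), x, ⟨hpos, hle1⟩, hx, rfl⟩
        have := hπle' _ hmem
        rwa [inner_add_right, real_inner_smul_right, real_inner_smul_right] at this
      have htend : Tendsto (fun n : ℕ => (1 / ((n:ℝ) + 1)) * ⟪π, b⟫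
          + (1 - 1 / ((n:ℝ) + 1)) * ⟪π, x⟫) atTop
          (nhds ((0:ℝ) * ⟪π, b⟫ + (1 - 0) * ⟪π, x⟫)) := by
        exact (tendsto_one_div_add_atTop_nhds_zero_nat.mul_const _).add
          ((tendsto_const_nhds.sub tendsto_one_div_add_atTop_nhds_zero_nat).mul_const _)
      have := ge_of_tendsto' htend hseq
      simpa using this
    have hωge : ∀ ω, c ≤ ∑ d, π d * S d ω := by
      intro ω
      have := hC₀ge _ (hφmem ω)
      rw [hinner] at this
      simpa only [hφapp] using this
    -- strictness gives some ω₀' with strict inequality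
    have hstrict : ∃ ω', c < ∑ d, π d * S d ω' := by
      obtain ⟨y₁, hy₁, rfl⟩ := hy₀
      rw [inner_add_right, inner_neg_right] at hy₀pos
      have hy₁c : c < ⟪π, y₁⟫ := by rw [hc]; linarith
      obtain ⟨ε, x, ⟨hε0, hε1⟩, hx, rfl⟩ := hy₁
      have hy₀' : c < ε * ⟪π, b⟫ + (1 - ε) * ⟪π, x⟫ := by
        rwa [inner_add_right, real_inner_smul_right, real_inner_smul_right] at hy₁c
      by_cases hbc : c < ⟪π, b⟫
      · -- use that b is the barycenter of Q
        by_contra hno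
        push_neg at hno
        have hgint : Integrable (fun ω => ∑ d, π d * S d ω) Q :=
          integrable_finset_sum _ (fun d _ => (hQint d).const_mul (π d))
        have hbQ : ⟪π, b⟫ = ∫ ω, ∑ d, π d * S d ω ∂Q := by
          rw [hinner]
          simp only [hbapp]
          rw [integral_finset_sum _ (fun d _ => (hQint d).const_mul (π d))]
          refine Finset.sum_congr rfl (fun d _ => ?_)
          rw [integral_const_mul]
        have hint_le : ∫ ω, ∑ d, π d * S d ω ∂Q ≤ ∫ _ω, c ∂Q :=
          integral_mono hgint (integrable_const c) hno
        rw [integral_const] at hint_le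
        simp [measure_univ] at hint_le
        rw [hbQ] at hbc
        linarith
      · push_neg at hbc
        have hxc : c < ⟪π, x⟫ := by
          have hxge : c ≤ ⟪π, x⟫ := hC₀ge x hx
          by_cases hε1' : ε = 1
          · exfalso
            rw [hε1'] at hy₀'
            rw [hinner] at hbc
            simp [hinner] at hy₀'
            linarith
          · have hεlt : ε < 1 := lt_of_le_of_ne hε1 hε1'
            clear hy₀pos hy₁c hc hπle hπle' hC₀ge hωge hinner hφmem
            nlinarith
        by_contra hno
        push_neg at hno
        have hsub : Set.range φ ⊆ {z : EuclideanSpace ℝ (Fin (D + 1)) | ⟪π, z⟫ ≤ c} := by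
          rintro _ ⟨ω, rfl⟩
          rw [Set.mem_setOf_eq, hinner]
          simpa only [hφapp] using hno ω
        have hhalf : Convex ℝ {z : EuclideanSpace ℝ (Fin (D + 1)) | ⟪π, z⟫ ≤ c} :=
          aux_halfspace_convex π c
        have := convexHull_min hsub hhalf hx
        rw [Set.mem_setOf_eq] at this
        linarith
    obtain ⟨ω', hω'⟩ := hstrict
    -- build an arbitrage
    refine hNA ⟨fun d => if d = 0 then π 0 - c else π d, ?_, ?_, ?_⟩
    · have hsplit : ∀ g : Fin (D + 1) → ℝ,
          (∑ d, (if d = 0 then π 0 - c else π d) * g d) = (∑ d, π d * g d) - c * g 0 := by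
        intro g
        have : ∀ d : Fin (D + 1), (if d = 0 then π 0 - c else π d) * g d
            = π d * g d - (if d = 0 then c * g d else 0) := by
          intro d
          by_cases h : d = 0
          · subst h; rw [if_pos rfl, if_pos rfl]; ring
          · rw [if_neg h, if_neg h, sub_zero]
        rw [Finset.sum_congr rfl (fun d _ => this d), Finset.sum_sub_distrib]
        congr 1
        simp
      rw [hsplit f, hf0, mul_one]
      have : (∑ d, π d * f d) = c := by
        rw [hc, hinner]
        exact Finset.sum_congr rfl (fun d _ => by rw [hFapp])
      rw [this]; simp
    · intro ω
      have hsplit : (∑ d, (if d = 0 then π 0 - c else π d) * S d ω)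
          = (∑ d, π d * S d ω) - c * S 0 ω := by
        have : ∀ d : Fin (D + 1), (if d = 0 then π 0 - c else π d) * S d ω
            = π d * S d ω - (if d = 0 then c * S d ω else 0) := by
          intro d
          by_cases h : d = 0
          · subst h; rw [if_pos rfl, if_pos rfl]; ring
          · rw [if_neg h, if_neg h, sub_zero]
        rw [Finset.sum_congr rfl (fun d _ => this d), Finset.sum_sub_distrib]
        congr 1
        simp
      rw [hsplit, hS0 ω, mul_one, sub_nonneg]
      exact hωge ω
    · refine ⟨ω', ?_⟩
      have hsplit : (∑ d, (if d = 0 then π 0 - c else π d) * S d ω')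
          = (∑ d, π d * S d ω') - c * S 0 ω' := by
        have : ∀ d : Fin (D + 1), (if d = 0 then π 0 - c else π d) * S d ω'
            = π d * S d ω' - (if d = 0 then c * S d ω' else 0) := by
          intro d
          by_cases h : d = 0
          · subst h; rw [if_pos rfl, if_pos rfl]; ring
          · rw [if_neg h, if_neg h, sub_zero]
        rw [Finset.sum_congr rfl (fun d _ => this d), Finset.sum_sub_distrib]
        congr 1
        simp
      rw [hsplit, hS0 ω', mul_one, sub_pos]
      exact hω'
  -- unpack F ∈ CS and build the measure
  obtain ⟨ε, x, ⟨hε0, hε1⟩, hx, hFeq⟩ := hFC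
  rw [mem_convexHull_iff_exists_fintype] at hx
  obtain ⟨ι, hfin, w, z, hw0, hw1, hz, hxz⟩ := hx
  choose ω' hω' using fun i => hz i
  have hFd : ∀ d, f d = ε * b d + (1 - ε) * x d := by
    intro d
    have := congrFun (congrArg WithLp.ofLp hFeq) d
    simpa [hFapp, PiLp.add_apply, PiLp.smul_apply, Pi.add_apply, Pi.smul_apply,
      smul_eq_mul] using this
  have hxd : ∀ d, x d = ∑ i, w i * S d (ω' i) := by
    intro d
    have := congrFun (congrArg WithLp.ofLp hxz.symm) d
    rw [this]
    rw [WithLp.ofLp_sum, Finset.sum_apply]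
    refine Finset.sum_congr rfl (fun i _ => ?_)
    have hzi : z i = φ (ω' i) := (hω' i).symm
    rw [hzi]
    simp [PiLp.smul_apply, Pi.smul_apply, smul_eq_mul, hφapp]
  set P : Measure Ω := ENNReal.ofReal ε • Q
      + ∑ i, ENNReal.ofReal ((1 - ε) * w i) • Measure.dirac (ω' i) with hP
  have hwnn : ∀ i, 0 ≤ (1 - ε) * w i := fun i => mul_nonneg (by linarith) (hw0 i)
  have hdint : ∀ d (i : ι), Integrable (S d) (Measure.dirac (ω' i)) := by
    intro d i
    refine ⟨(S d).continuous.aestronglyMeasurable, ?_⟩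
    show (∫⁻ ω, (‖S d ω‖₊ : ENNReal) ∂(Measure.dirac (ω' i))) < ⊤
    rw [lintegral_dirac]
    exact ENNReal.coe_lt_top
  have hPint : ∀ d, Integrable (S d) P := by
    intro d
    rw [hP]
    refine Integrable.add_measure ((hQint d).smul_measure ENNReal.ofReal_ne_top) ?_
    refine integrable_finset_sum_measure.2 ?_
    intro i _
    exact (hdint d i).smul_measure ENNReal.ofReal_ne_top
  have hPprob : IsProbabilityMeasure P := by
    constructor
    rw [hP, Measure.add_apply, Measure.smul_apply, smul_eq_mul, measure_univ, mul_one]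
    have : (∑ i, ENNReal.ofReal ((1 - ε) * w i) • Measure.dirac (ω' i)) Set.univ
        = ∑ i, ENNReal.ofReal ((1 - ε) * w i) := by
      rw [Measure.finset_sum_apply]
      refine Finset.sum_congr rfl (fun i _ => ?_)
      rw [Measure.smul_apply, smul_eq_mul, measure_univ, mul_one]
    rw [this, ← ENNReal.ofReal_sum_of_nonneg (fun i _ => hwnn i), ← Finset.mul_sum, hw1, mul_one,
      ← ENNReal.ofReal_add hε0.le (by linarith)]
    norm_num
  refine ⟨P, ⟨hPprob, fun d => ⟨hPint d, ?_⟩⟩, ?_⟩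
  · -- the integral computation
    have hint2 : Integrable (S d) (∑ i, ENNReal.ofReal ((1 - ε) * w i) • Measure.dirac (ω' i)) :=
      integrable_finset_sum_measure.2 (fun i _ => (hdint d i).smul_measure ENNReal.ofReal_ne_top)
    have h3 : ∫ ω, S d ω ∂(∑ i, ENNReal.ofReal ((1 - ε) * w i) • Measure.dirac (ω' i))
        = ∑ i, ∫ ω, S d ω ∂(ENNReal.ofReal ((1 - ε) * w i) • Measure.dirac (ω' i)) :=
      integral_finset_sum_measure (fun i _ => (hdint d i).smul_measure ENNReal.ofReal_ne_top)
    rw [hP, integral_add_measure ((hQint d).smul_measure ENNReal.ofReal_ne_top) hint2,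
      integral_smul_measure, h3]
    have h1 : ∀ i : ι, ∫ ω, S d ω ∂(ENNReal.ofReal ((1 - ε) * w i) • Measure.dirac (ω' i))
        = (1 - ε) * w i * S d (ω' i) := by
      intro i
      rw [integral_smul_measure, integral_dirac, ENNReal.toReal_ofReal (hwnn i), smul_eq_mul]
    rw [Finset.sum_congr rfl (fun i _ => h1 i), ENNReal.toReal_ofReal hε0.le, smul_eq_mul]
    have h2 : ∑ i, (1 - ε) * w i * S d (ω' i) = (1 - ε) * x d := by
      rw [hxd d, Finset.mul_sum]
      refine Finset.sum_congr rfl (fun i _ => by ring)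
    rw [h2, hFd d, hbapp d]
  · intro U hU hUne
    have h1 : ENNReal.ofReal ε * Q U ≤ P U := by
      rw [hP, Measure.add_apply, Measure.smul_apply, smul_eq_mul]
      exact le_self_add
    refine lt_of_lt_of_le ?_ h1
    exact ENNReal.mul_pos (ENNReal.ofReal_pos.2 hε0).ne' (hQfull U hU hUne).ne'
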